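/- Let G be a finite group and p a prime. If ε_p(G) = m, i.e., the largest p-exponent of a conjugacy class size of G is m, then a Sylow p-subgroup of G/Z(G) has Frattini length at most m (its m-th iterated Frattini subgroup is trivial). -/

import Mathlib

/-- The iterated Frattini series of a subgroup, realized as subgroups of the
ambient group: `frattiniIter H 0 = H` and
`frattiniIter H (m+1) = Φ(frattiniIter H m)`. -/
def frattiniIter {G : Type*} [Group G] (H : Subgroup G) : ℕ → Subgroup G
  | 0 => H
  | (m + 1) => (frattini (frattiniIter H m)).map (frattiniIter H m).subtype

/-- `εₚ(G)`: the largest `p`-exponent of a conjugacy class size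
(equivalently, of the index of a centralizer) in `G`. -/
noncomputable def epsP (p : ℕ) (G : Type*) [Group G] : ℕ :=
  sSup {k | ∃ x : G, ((Subgroup.centralizer {x}).index).factorization p = k}



open Subgroup

lemma frattiniIter_le {G : Type*} [Group G] (K : Subgroup G) (m : ℕ) :
    frattiniIter K m ≤ K := by
  induction m with
  | zero => exact le_rfl
  | succ m ih => exact (map_subtype_le _).trans ih

lemma frattiniIter_succ_shift {G : Type*} [Group G] (K : Subgroup G) (m : ℕ) :
    frattiniIter K (m + 1) =
      frattiniIter ((frattini (frattiniIter K 0)).map (frattiniIter K 0).subtype) m := by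
  induction m with
  | zero => rfl
  | succ m ih =>
    show (frattini (frattiniIter K (m+1))).map (frattiniIter K (m+1)).subtype = _
    rw [ih]
    rfl

-- frattini under iso
lemma frattini_map_equiv {H₁ H₂ : Type*} [Group H₁] [Group H₂] (f : H₁ ≃* H₂) :
    (frattini H₁).map f.toMonoidHom = frattini H₂ := by
  apply le_antisymm
  · rw [Subgroup.map_le_iff_le_comap]
    exact frattini_le_comap_frattini_of_surjective f.surjective
  · intro x hx
    have h2 := frattini_le_comap_frattini_of_surjective (φ := f.symm.toMonoidHom) f.symm.surjective
    have := h2 hx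
    simp only [Subgroup.mem_comap] at this
    exact ⟨f.symm x, this, f.apply_symm_apply x⟩

lemma frattiniIter_map_equiv {G G' : Type*} [Group G] [Group G'] (e : G ≃* G')
    (K : Subgroup G) (m : ℕ) :
    (frattiniIter K m).map e.toMonoidHom = frattiniIter (K.map e.toMonoidHom) m := by
  induction m with
  | zero => rfl
  | succ m ih =>
    show ((frattini (frattiniIter K m)).map (frattiniIter K m).subtype).map e.toMonoidHom
        = (frattini (frattiniIter (map e.toMonoidHom K) m)).map
            (frattiniIter (map e.toMonoidHom K) m).subtype
    rw [← ih]
    set A := frattiniIter K m with hA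
    set eA : A ≃* (A.map e.toMonoidHom) := e.subgroupMap A
    have hcomm : (A.map e.toMonoidHom).subtype.comp eA.toMonoidHom
        = e.toMonoidHom.comp A.subtype := by
      ext a; rfl
    rw [Subgroup.map_map, ← hcomm, ← Subgroup.map_map, frattini_map_equiv eA]

open Subgroup
open scoped Pointwise
lemma relindex_ne_zero_of_finite' {G : Type*} [Group G] [Finite G] (H K : Subgroup G) :
    H.relIndex K ≠ 0 :=
  Subgroup.index_ne_zero_of_finite (H := H.subgroupOf K)

lemma frattiniIter_le_of_relIndex_le {G : Type*} [Group G] [Finite G] {p : ℕ}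
    [hp : Fact p.Prime] :
    ∀ (m : ℕ) (K H : Subgroup G), IsPGroup p K → H.relIndex K ≤ p ^ m →
      frattiniIter K m ≤ H := by
  intro m
  induction m with
  | zero =>
    intro K H _ h
    have h1 : H.relIndex K = 1 :=
      le_antisymm (by simpa using h) (Nat.one_le_iff_ne_zero.mpr (relindex_ne_zero_of_finite' H K))
    exact relIndex_eq_one.mp h1
  | succ m ih =>
    intro K H hK h
    by_cases hKH : K ≤ H
    · exact (frattiniIter_le K (m+1)).trans hKH
    · -- find a maximal subgroup of K containing H ⊓ K
      have hne : H.subgroupOf K ≠ ⊤ := fun htop => hKH (subgroupOf_eq_top.mp htop)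
      obtain ⟨M, hMco, hHM⟩ := (eq_top_or_exists_le_coatom (H.subgroupOf K)).resolve_left hne
      set MG := M.map K.subtype with hMG
      have hMGK : MG ≤ K := map_subtype_le M
      have hHKM : H ⊓ K ≤ MG := by
        rw [hMG, ← subgroupOf_map_subtype]
        exact map_mono hHM
      -- b = index of M in K
      have hMne : MG.relIndex K ≠ 1 := by
        intro h1
        have hKMG : K ≤ MG := relIndex_eq_one.mp h1
        have hMtop : M = ⊤ := by
          rw [eq_top_iff]
          intro x _
          obtain ⟨y, hy, hyx⟩ := hKMG x.2
          rwa [← show y = x from Subtype.ext hyx]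
        exact hMco.1 hMtop
      have hbdvd : MG.relIndex K ∣ Nat.card K := by
        have : MG.relIndex K = (MG.subgroupOf K).index := rfl
        rw [this]
        simpa using index_dvd_card (MG.subgroupOf K)
      obtain ⟨n, hn⟩ := IsPGroup.iff_card.mp hK
      have hb_pow : ∃ i, MG.relIndex K = p ^ i := by
        have := hbdvd
        rw [hn] at this
        obtain ⟨i, _, hi⟩ := (Nat.dvd_prime_pow hp.out).mp this
        exact ⟨i, hi⟩
      have hpb : p ∣ MG.relIndex K := by
        obtain ⟨i, hi⟩ := hb_pow
        match i, hi with
        | 0, hi => rw [pow_zero] at hi; exact absurd hi hMne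
        | (j+1), hi => rw [hi, pow_succ]; exact dvd_mul_left p (p ^ j)
      -- a * b = relIndex H K ≤ p^(m+1)
      have hab : (H ⊓ K).relIndex MG * MG.relIndex K = H.relIndex K := by
        rw [relIndex_mul_relIndex (H ⊓ K) MG K hHKM hMGK, inf_relIndex_right]
      have haMG : (H ⊓ K).relIndex MG = H.relIndex MG := by
        have : H ⊓ MG = (H ⊓ K) ⊓ MG := by
          rw [inf_assoc, inf_of_le_right hMGK]
        rw [← inf_relIndex_right H MG, this, inf_relIndex_right]
      have ha : H.relIndex MG ≤ p ^ m := by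
        have h1 : H.relIndex MG * p ≤ p ^ m * p := by
          calc H.relIndex MG * p ≤ H.relIndex MG * MG.relIndex K :=
                Nat.mul_le_mul_left _ (Nat.le_of_dvd
                  (Nat.pos_of_ne_zero (relindex_ne_zero_of_finite' MG K)) hpb)
            _ = H.relIndex K := by rw [← haMG, hab]
            _ ≤ p ^ (m+1) := h
            _ = p ^ m * p := by ring
        exact Nat.le_of_mul_le_mul_right h1 hp.out.pos
      -- K₁ = frattini image
      set K₁ := (frattini K).map K.subtype with hK₁
      have hK₁M : K₁ ≤ MG := map_mono (frattini_le_coatom hMco)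
      have hc : H.relIndex K₁ ≤ p ^ m :=
        (relIndex_le_of_le_right hK₁M (relindex_ne_zero_of_finite' H MG)).trans ha
      have hK₁p : IsPGroup p K₁ := (hK.to_le (map_subtype_le (frattini K))).to_le le_rfl
      rw [frattiniIter_succ_shift]
      exact ih K₁ H hK₁p hc

lemma sylow_relIndex_dvd {G' : Type*} [Group G'] [Finite G'] {p : ℕ} [hp : Fact p.Prime]
    (B : Subgroup G') (S : Sylow p ↥B) (Q : Sylow p G')
    (h : (S : Subgroup ↥B).map B.subtype ≤ (Q : Subgroup G')) :
    ((S : Subgroup ↥B).map B.subtype).relIndex Q ∣ B.index := by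
  classical
  set A := (S : Subgroup ↥B).map B.subtype with hA
  set d := A.relIndex (Q : Subgroup G') with hd
  have cardA : Nat.card A = Nat.card S :=
    (Nat.card_congr (equivMapOfInjective _ _ B.subtype_injective).toEquiv).symm
  have hd' : (A.subgroupOf (Q : Subgroup G')).index = d := rfl
  have dmul : Nat.card A * d = Nat.card (Q : Subgroup G') := by
    have h2 := card_mul_index (A.subgroupOf (Q : Subgroup G'))
    rw [hd', Nat.card_congr (subgroupOfEquivOfLe h).toEquiv] at h2
    exact h2
  have SB := card_mul_index (S : Subgroup ↥B)
  have BG := card_mul_index B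
  have QG := card_mul_index (Q : Subgroup G')
  have cardSpos : 0 < Nat.card (S : Subgroup ↥B) := Nat.card_pos
  have key : (S : Subgroup ↥B).index * B.index = d * (Q : Subgroup G').index := by
    have e1 : Nat.card (S : Subgroup ↥B) * ((S : Subgroup ↥B).index * B.index)
        = Nat.card G' := by rw [← mul_assoc, SB, BG]
    have e2 : Nat.card (S : Subgroup ↥B) * (d * (Q : Subgroup G').index)
        = Nat.card G' := by rw [← mul_assoc, ← cardA, dmul, QG]
    exact Nat.eq_of_mul_eq_mul_left cardSpos (e1.trans e2.symm)
  -- d is a power of p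
  have hdQ : d ∣ Nat.card (Q : Subgroup G') := Dvd.intro_left _ dmul
  obtain ⟨n, hn⟩ := IsPGroup.iff_card.mp Q.2
  obtain ⟨j, _, hj⟩ := (Nat.dvd_prime_pow hp.out).mp (hn ▸ hdQ)
  have hpS : ¬ p ∣ (S : Subgroup ↥B).index := S.not_dvd_index
  have hcop : Nat.Coprime d ((S : Subgroup ↥B).index) := by
    rw [hj]
    exact Nat.Coprime.pow_left _ ((Nat.Prime.coprime_iff_not_dvd hp.out).mpr hpS)
  have hdvd : d ∣ (S : Subgroup ↥B).index * B.index := key ▸ Dvd.intro _ rfl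
  exact hcop.dvd_of_dvd_mul_left hdvd

lemma eq_top_of_forall_conj_mem {G : Type*} [Group G] [Finite G] (H : Subgroup G)
    (hc : ∀ y : G, ∃ g : G, g * y * g⁻¹ ∈ H) : H = ⊤ := by
  classical
  by_contra hne
  letI : Fintype (G ⧸ H) := Fintype.ofFinite _
  have hn0 : H.index ≠ 0 := H.index_ne_zero_of_finite
  have hn1 : H.index ≠ 1 := fun h => hne (index_eq_one.mp h)
  set K : G ⧸ H → Subgroup G := fun q => H.map (MulAut.conj q.out).toMonoidHom with hK
  have hKindex : ∀ q, (K q).index = H.index := by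
    intro q
    rw [hK]
    simp only [index_map]
    rw [(MonoidHom.ker_eq_bot_iff _).mpr (MulAut.conj q.out).injective,
      MonoidHom.range_eq_top_of_surjective _ (MulAut.conj q.out).surjective]
    simp
  have hmem : ∀ (q : G ⧸ H) (y : G), (q.out)⁻¹ * y * q.out ∈ H → y ∈ K q := by
    intro q y h
    exact ⟨(q.out)⁻¹ * y * q.out, h, by simp [MulAut.conj_apply]; group⟩
  have hcovers : ⋃ q ∈ (Finset.univ : Finset (G ⧸ H)),
      (fun _ => (1:G)) q • (K q : Set G) = Set.univ := by
    apply Set.eq_univ_of_forall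
    intro y
    simp only [Finset.mem_univ, Set.mem_iUnion, one_smul, SetLike.mem_coe, Set.iUnion_true]
    obtain ⟨g, hg⟩ := hc y
    refine ⟨(g⁻¹ : G), hmem _ _ ?_⟩
    have hout : ((g⁻¹ : G) : G ⧸ H).out⁻¹ * g⁻¹ ∈ H := by
      have := QuotientGroup.mk_out_eq_mul H (g⁻¹ : G)
      obtain ⟨h, hh⟩ := this
      rw [hh]
      simp [mul_assoc, h.2]
    set u := ((g⁻¹ : G) : G ⧸ H).out
    have key : u⁻¹ * y * u = (u⁻¹ * g⁻¹) * (g * y * g⁻¹) * (u⁻¹ * g⁻¹)⁻¹ := by group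
    rw [key]
    exact H.mul_mem (H.mul_mem hout hg) (H.inv_mem hout)
  have hsum : ∑ q ∈ (Finset.univ : Finset (G ⧸ H)), (((K q).index : ℚ))⁻¹ = 1 := by
    simp only [hKindex]
    rw [Finset.sum_const, nsmul_eq_mul]
    rw [Finset.card_univ, ← Nat.card_eq_fintype_card, ← index_eq_card]
    rw [mul_inv_cancel₀ (Nat.cast_ne_zero.mpr hn0)]
  have hdisj := Subgroup.pairwiseDisjoint_leftCoset_cover_of_sum_inv_index_eq_one hcovers hsum
  have hcard : 1 < Fintype.card (G ⧸ H) := by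
    rw [← Nat.card_eq_fintype_card, ← index_eq_card]
    omega
  obtain ⟨q₁, q₂, hq⟩ := Fintype.exists_pair_of_one_lt_card hcard
  have hfin : ∀ q : G ⧸ H, (K q).FiniteIndex := fun q => ⟨by rw [hKindex]; exact hn0⟩
  have hmemf : ∀ q : G ⧸ H, q ∈ Finset.univ.filter (fun i => (K i).FiniteIndex) := by
    intro q; simp [hfin q]
  have := hdisj (hmemf q₁) (hmemf q₂) hq
  have h2 : Disjoint ((1:G) • (K q₁ : Set G)) ((1:G) • (K q₂ : Set G)) := this
  rw [Set.disjoint_left] at h2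
  exact h2 (a := (1:G)) (by simp [(K q₁).one_mem]) (by simp [(K q₂).one_mem])

lemma centralizer_conj {G : Type*} [Group G] (y g : G) :
    (Subgroup.centralizer {y}).map (MulAut.conj g).toMonoidHom
      = Subgroup.centralizer {g * y * g⁻¹} := by
  ext x
  simp only [mem_map, mem_centralizer_singleton_iff, MulEquiv.coe_toMonoidHom,
    MulAut.conj_apply]
  constructor
  · rintro ⟨c, hc, rfl⟩
    calc g * c * g⁻¹ * (g * y * g⁻¹) = g * (c * y) * g⁻¹ := by group
      _ = g * (y * c) * g⁻¹ := by rw [hc]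
      _ = g * y * g⁻¹ * (g * c * g⁻¹) := by group
  · intro hx
    refine ⟨g⁻¹ * x * g, ?_, by group⟩
    have h1 : g⁻¹ * (x * (g * y * g⁻¹)) * g = g⁻¹ * ((g * y * g⁻¹) * x) * g := by rw [hx]
    calc g⁻¹ * x * g * y = g⁻¹ * (x * (g * y * g⁻¹)) * g := by group
      _ = g⁻¹ * ((g * y * g⁻¹) * x) * g := h1
      _ = y * (g⁻¹ * x * g) := by group

theorem frattiniIter_sylow_quotient_center_eq_bot {G : Type*} [Group G] [Finite G]
    (p : ℕ) [Fact p.Prime] (m : ℕ) (hm : epsP p G = m)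
    (Q : Sylow p (G ⧸ Subgroup.center G)) :
    frattiniIter (Q : Subgroup (G ⧸ Subgroup.center G)) m = ⊥ := by
  have hp : Fact p.Prime := inferInstance
  set Z := Subgroup.center G with hZdef
  set π := QuotientGroup.mk' Z with hπdef
  have hπs : Function.Surjective π := QuotientGroup.mk'_surjective Z
  -- the bound on p-parts of class sizes
  have hbound : ∀ x : G, ((Subgroup.centralizer {x}).index).factorization p ≤ m := by
    intro x
    rw [← hm]
    apply le_csSup
    · refine ⟨Nat.card G, ?_⟩
      rintro k ⟨x', rfl⟩
      have h1 : (Subgroup.centralizer {x'}).index ≠ 0 := Subgroup.index_ne_zero_of_finite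
      calc ((Subgroup.centralizer {x'}).index).factorization p
          ≤ (Subgroup.centralizer {x'}).index := (Nat.factorization_lt p h1).le
        _ ≤ Nat.card G := Nat.le_of_dvd Nat.card_pos (index_dvd_card _)
    · exact ⟨x, rfl⟩
  set W : Subgroup G := (frattiniIter (Q : Subgroup (G ⧸ Z)) m).comap (π : G →* G ⧸ Z)
    with hWdef
  -- the covering step
  have hkey : ∀ y : G, ∃ g : G, g * y * g⁻¹ ∈ Subgroup.centralizer (W : Set G) := by
    intro y
    set C := Subgroup.centralizer ({y} : Set G) with hCdef
    have hZC : Z ≤ C := Subgroup.center_le_centralizer {y}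
    obtain ⟨S⟩ : Nonempty (Sylow p ↥C) := inferInstance
    set A₀ : Subgroup G := (S : Subgroup ↥C).map C.subtype with hA₀
    set B : Subgroup (G ⧸ Z) := C.map π with hB
    set Abar : Subgroup (G ⧸ Z) := A₀.map π with hAbar
    have hABp : IsPGroup p Abar := (S.2.map C.subtype).map (π : G →* G ⧸ Z)
    obtain ⟨R, hR⟩ := hABp.exists_le_sylow
    obtain ⟨gbar, hgR⟩ := MulAction.exists_smul_eq (G ⧸ Z) R Q
    obtain ⟨g, hg⟩ := hπs gbar
    refine ⟨g, ?_⟩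
    -- the image of S in B is a Sylow subgroup of B
    let S' : Sylow p ↥B :=
      Sylow.mapSurjective (MonoidHom.subgroupMap_surjective (π : G →* G ⧸ Z) C) S
    have hS'coe : (S' : Subgroup ↥B).map B.subtype = Abar := by
      show ((S : Subgroup ↥C).map ((π : G →* G ⧸ Z).subgroupMap C)).map B.subtype = Abar
      rw [map_map, hAbar, hA₀, map_map]
      rfl
    have hAbarB : Abar ≤ B := map_mono (map_subtype_le _)
    have hd1 : B.relIndex R ∣ Abar.relIndex R :=
      relIndex_dvd_of_le_left _ hAbarB
    have hd2 : Abar.relIndex R ∣ B.index := by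
      have h3 := sylow_relIndex_dvd B S' R (by rw [hS'coe]; exact hR)
      rwa [hS'coe] at h3
    have hBind : B.index = C.index := by
      rw [hB, index_map]
      have hker : (π : G →* G ⧸ Z).ker = Z := QuotientGroup.ker_mk' Z
      rw [hker, sup_of_le_left hZC,
        MonoidHom.range_eq_top_of_surjective _ hπs, index_top, mul_one]
    -- B.relIndex R is a p-power bounded by p^m
    have hle : B.relIndex R ≤ p ^ m := by
      have h4 : Abar.relIndex R ∣ Nat.card (R : Subgroup (G ⧸ Z)) := by
        have h5 := card_mul_index (Abar.subgroupOf (R : Subgroup (G ⧸ Z)))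
        exact Dvd.intro_left _ h5
      obtain ⟨n, hn⟩ := IsPGroup.iff_card.mp R.2
      obtain ⟨j, _, hj⟩ := (Nat.dvd_prime_pow hp.out).mp (hn ▸ (hd1.trans h4))
      have hdvdC : p ^ j ∣ C.index := by
        rw [← hj, ← hBind]
        exact hd1.trans hd2
      have hCne : C.index ≠ 0 := Subgroup.index_ne_zero_of_finite
      have hjm : j ≤ m :=
        ((Nat.Prime.pow_dvd_iff_le_factorization hp.out hCne).mp hdvdC).trans (hbound y)
      rw [hj]
      exact Nat.pow_le_pow_right hp.out.one_lt.le hjm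
    have hfIR : frattiniIter (R : Subgroup (G ⧸ Z)) m ≤ B :=
      frattiniIter_le_of_relIndex_le m _ B R.2 hle
    -- transport along conjugation by gbar
    have hQR : (Q : Subgroup (G ⧸ Z))
        = (R : Subgroup (G ⧸ Z)).map (MulAut.conj gbar).toMonoidHom := by
      rw [← hgR]
      rfl
    have hstep : frattiniIter (Q : Subgroup (G ⧸ Z)) m
        ≤ B.map (MulAut.conj gbar).toMonoidHom := by
      rw [hQR, ← frattiniIter_map_equiv]
      exact map_mono hfIR
    have hcomm : (MulAut.conj gbar).toMonoidHom.comp (π : G →* G ⧸ Z)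
        = (π : G →* G ⧸ Z).comp (MulAut.conj g).toMonoidHom := by
      ext x
      simp only [MonoidHom.comp_apply, MulEquiv.coe_toMonoidHom, MulAut.conj_apply,
        map_mul, map_inv, hg]
    have hBC' : B.map (MulAut.conj gbar).toMonoidHom
        = (Subgroup.centralizer {g * y * g⁻¹}).map (π : G →* G ⧸ Z) := by
      rw [hB, map_map, hcomm, ← map_map, centralizer_conj]
    rw [mem_centralizer_iff]
    intro x hx
    have hx0 : x ∈ W := hx
    have hx1 : (π : G →* G ⧸ Z) x
        ∈ (Subgroup.centralizer {g * y * g⁻¹}).map (π : G →* G ⧸ Z) := by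
      rw [← hBC']
      exact hstep (mem_comap.mp hx0)
    obtain ⟨c, hc, hcx⟩ := hx1
    have hzc : c⁻¹ * x ∈ Z := by
      have h6 : (π : G →* G ⧸ Z) (c⁻¹ * x) = 1 := by
        rw [map_mul, map_inv, hcx]
        simp
      have h7 : c⁻¹ * x ∈ (π : G →* G ⧸ Z).ker := h6
      rwa [QuotientGroup.ker_mk' Z] at h7
    have hxC' : x ∈ Subgroup.centralizer {g * y * g⁻¹} := by
      have h8 := Subgroup.mul_mem _ hc (Subgroup.center_le_centralizer {g * y * g⁻¹} hzc)
      simpa using h8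
    exact mem_centralizer_singleton_iff.mp hxC'
  -- conclude
  have htop := eq_top_of_forall_conj_mem _ hkey
  have hWZ : W ≤ Z := by
    intro x hx
    rw [hZdef, Subgroup.mem_center_iff]
    intro y2
    have h2 : y2 ∈ Subgroup.centralizer (W : Set G) := htop ▸ Subgroup.mem_top y2
    exact (mem_centralizer_iff.mp h2 x hx).symm
  have hmap : frattiniIter (Q : Subgroup (G ⧸ Z)) m = W.map (π : G →* G ⧸ Z) :=
    (map_comap_eq_self_of_surjective hπs _).symm
  rw [hmap, eq_bot_iff]
  rintro _ ⟨z, hz, rfl⟩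
  have hzZ : z ∈ Z := hWZ hz
  show (π : G →* G ⧸ Z) z ∈ (⊥ : Subgroup (G ⧸ Z))
  rw [Subgroup.mem_bot]
  have : z ∈ (π : G →* G ⧸ Z).ker := by rwa [QuotientGroup.ker_mk' Z]
  exact this
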